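/- Let Q := {(x₁, x₂) ∈ ℝ² : x₁ ≥ 1} and f(x₁, x₂) := x₂²/x₁. Then f is convex on Q, f attains its minimum value f* = 0 on Q with Opt = {(x₁, 0) : x₁ ≥ 1}, and for every strict lower bound f_slb < 0 the growth constant is infinite: for every Ḡ > 0 there exists x ∈ Q with Dist(x, Opt) > Ḡ·(f(x) − f_slb). -/

import Mathlib

lemma coord_dist_le (x y : EuclideanSpace ℝ (Fin 2)) (i : Fin 2) :
    dist (x i) (y i) ≤ dist x y := by
  rw [EuclideanSpace.dist_eq]
  have h1 : dist (x i) (y i) = Real.sqrt (dist (x i) (y i) ^ 2) := by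
    rw [Real.sqrt_sq dist_nonneg]
  rw [h1]
  apply Real.sqrt_le_sqrt
  exact Finset.single_le_sum (f := fun j => dist (x j) (y j) ^ 2)
    (fun j _ => sq_nonneg _) (Finset.mem_univ i)

/-- Example with infinite growth constant: `Q = {x : x₁ ≥ 1}` and
`f(x₁,x₂) = x₂²/x₁`. -/
theorem growth_constant_infinite_example
    (Q : Set (EuclideanSpace ℝ (Fin 2))) (f : EuclideanSpace ℝ (Fin 2) → ℝ)
    (hQ : Q = {p : EuclideanSpace ℝ (Fin 2) | 1 ≤ p 0})
    (hf : f = fun p : EuclideanSpace ℝ (Fin 2) => (p 1) ^ 2 / p 0) :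
    ConvexOn ℝ Q f ∧
    (∃ z ∈ Q, f z = 0) ∧ (∀ z ∈ Q, (0 : ℝ) ≤ f z) ∧
    {z ∈ Q | f z = 0} = {p : EuclideanSpace ℝ (Fin 2) | 1 ≤ p 0 ∧ p 1 = 0} ∧
    ∀ fslb : ℝ, fslb < 0 → ∀ Gbar : ℝ, 0 < Gbar →
      ∃ x ∈ Q, Gbar * (f x - fslb) < Metric.infDist x {z ∈ Q | f z = 0} := by
  subst hQ hf
  have hlin : IsLinearMap ℝ (fun p : EuclideanSpace ℝ (Fin 2) => p 0) :=
    ⟨fun x y => rfl, fun c x => rfl⟩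
  have hQconv : Convex ℝ {p : EuclideanSpace ℝ (Fin 2) | 1 ≤ p 0} :=
    convex_halfSpace_ge hlin 1
  have hconv : ConvexOn ℝ {p : EuclideanSpace ℝ (Fin 2) | 1 ≤ p 0}
      (fun p : EuclideanSpace ℝ (Fin 2) => (p 1) ^ 2 / p 0) := by
    refine ⟨hQconv, ?_⟩
    intro x hx y hy s t hs ht hst
    simp only [Set.mem_setOf_eq] at hx hy
    have hx0 : (0:ℝ) < x 0 := by linarith
    have hy0 : (0:ℝ) < y 0 := by linarith
    have hz0 : (0:ℝ) < s * x 0 + t * y 0 := by nlinarith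
    have happ : ∀ i : Fin 2, (s • x + t • y) i = s * x i + t * y i := by
      intro i; rfl
    simp only [happ, smul_eq_mul]
    rw [mul_div_assoc', mul_div_assoc', div_add_div _ _ (ne_of_gt hx0) (ne_of_gt hy0), div_le_div_iff₀ hz0 (by positivity)]
    nlinarith [sq_nonneg (x 1 * y 0 - y 1 * x 0), mul_pos hx0 hy0, sq_nonneg (s * x 1 - t * y 1),
      mul_nonneg (mul_nonneg hs ht) (sq_nonneg (x 1 * y 0 - y 1 * x 0))]
  refine ⟨hconv, ?_, ?_, ?_, ?_⟩
  · refine ⟨(WithLp.equiv 2 (Fin 2 → ℝ)).symm ![1, 0], ?_, ?_⟩ <;>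
      simp [WithLp.equiv_symm_apply, PiLp.toLp_apply]
  · intro z hz
    simp only [Set.mem_setOf_eq] at hz
    positivity
  · ext p
    simp only [Set.mem_setOf_eq, Set.mem_sep_iff]
    constructor
    · rintro ⟨h1, h2⟩
      refine ⟨h1, ?_⟩
      have hp0 : p 0 ≠ 0 := by positivity
      have := (div_eq_zero_iff.mp h2).resolve_right hp0
      exact pow_eq_zero_iff (n := 2) (by norm_num) |>.mp this
    · rintro ⟨h1, h2⟩
      exact ⟨h1, by rw [h2]; simp⟩
  · intro fslb hfslb Gbar hGbar
    set T : ℝ := max 1 (Gbar * (1 - fslb) + 1) with hT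
    have hT1 : (1:ℝ) ≤ T := le_max_left _ _
    have hT2 : Gbar * (1 - fslb) + 1 ≤ T := le_max_right _ _
    set x : EuclideanSpace ℝ (Fin 2) := (WithLp.equiv 2 (Fin 2 → ℝ)).symm ![T^2, T] with hx
    have hx0 : x 0 = T^2 := rfl
    have hx1 : x 1 = T := rfl
    have hxQ : x ∈ {p : EuclideanSpace ℝ (Fin 2) | 1 ≤ p 0} := by
      simp only [Set.mem_setOf_eq, hx0]; nlinarith
    refine ⟨x, hxQ, ?_⟩
    have hfx : (x 1) ^ 2 / x 0 = 1 := by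
      rw [hx0, hx1]; field_simp
    have hne : ({z ∈ {p : EuclideanSpace ℝ (Fin 2) | 1 ≤ p 0} | (z 1)^2 / z 0 = 0}).Nonempty := by
      refine ⟨(WithLp.equiv 2 (Fin 2 → ℝ)).symm ![1, 0], ?_⟩
      constructor <;> simp [WithLp.equiv_symm_apply, PiLp.toLp_apply]
    have hdist : T ≤ Metric.infDist x {z ∈ {p : EuclideanSpace ℝ (Fin 2) | 1 ≤ p 0} | (z 1)^2 / z 0 = 0} := by
      refine le_of_not_gt fun hlt => ?_
      obtain ⟨z, hzmem, hdz⟩ := (Metric.infDist_lt_iff hne).mp hlt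
      obtain ⟨hz1, hz2⟩ := hzmem
      simp only [Set.mem_setOf_eq] at hz1
      have hz0 : z 0 ≠ 0 := by intro h; rw [h] at hz1; linarith
      have hz10 : z 1 = 0 := by
        have := (div_eq_zero_iff.mp hz2).resolve_right hz0
        exact pow_eq_zero_iff (n := 2) (by norm_num) |>.mp this
      have := coord_dist_le x z 1
      rw [Real.dist_eq, hx1, hz10] at this
      have hle : T ≤ dist x z := by
        calc T = |T - 0| := by rw [sub_zero, abs_of_pos (by linarith)]
        _ ≤ dist x z := this
      linarith
    have : Gbar * ((x 1)^2 / x 0 - fslb) < T := by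
      rw [hfx]; linarith
    linarith
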